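/- arXiv:2104.11396 — 2 statements merged into one kernel-verified Lean document; each statement's English description precedes it below -/
import Mathlib

section
/- All intermediate states in an n-qubit quantum Fourier transform circuit are rank-1 (product states) if the input to the circuit is a standard basis state |i₁⟩ ⊗ |i₂⟩ ⊗ ... ⊗ |iₙ⟩ with i_j ∈ {0,1}. -/
open scoped BigOperators

namespace QFTRankOne

/-- The state space of `n` qubits, viewed as an order-`n` tensor. -/
abbrev QState (n : ℕ) := (Fin n → Fin 2) → ℂ

/-- The Hadamard gate. -/
noncomputable def Hgate : Matrix (Fin 2) (Fin 2) ℂ :=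
  ((1 / Real.sqrt 2 : ℝ) : ℂ) • !![1, 1; 1, -1]

/-- The phase rotation gate `R_k = diag(1, e^{-2πi/2^k})`. -/
noncomputable def Rgate (k : ℕ) : Matrix (Fin 2) (Fin 2) ℂ :=
  !![1, 0; 0, Complex.exp (-(2 * Real.pi * Complex.I) / (2 ^ k))]

/-- Gates of a quantum circuit on `n` qubits: one-qubit gates, controlled one-qubit
gates, and swaps. -/
inductive Gate (n : ℕ)
  | one (U : Matrix (Fin 2) (Fin 2) ℂ) (q : Fin n)
  | ctrl (U : Matrix (Fin 2) (Fin 2) ℂ) (c t : Fin n)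
  | swp (p q : Fin n)

/-- The action of a gate on an `n`-qubit state. -/
noncomputable def applyGate {n : ℕ} : Gate n → QState n → QState n
  | Gate.one U q, ψ => fun f => ∑ j : Fin 2, U (f q) j * ψ (Function.update f q j)
  | Gate.ctrl U c t, ψ => fun f =>
      if f c = 1 then ∑ j : Fin 2, U (f t) j * ψ (Function.update f t j) else ψ f
  | Gate.swp p q, ψ => fun f => ψ (f ∘ Equiv.swap p q)

/-- Apply a list of gates (a circuit) in order. -/
noncomputable def applyGates {n : ℕ} (gs : List (Gate n)) (ψ : QState n) : QState n :=
  gs.foldl (fun φ g => applyGate g φ) ψ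

/-- The gate sequence of the `n`-qubit quantum Fourier transform circuit:
for each qubit `i`, a Hadamard gate followed by the controlled-`R_{j-i+1}` gates
with control `j > i` and target `i`, and finally the qubit-reversing swaps. -/
noncomputable def qftGates (n : ℕ) : List (Gate n) :=
  ((List.finRange n).flatMap fun i =>
      Gate.one Hgate i ::
        (((List.finRange n).filter fun (j : Fin n) => decide ((i : ℕ) < (j : ℕ))).map
          fun (j : Fin n) => Gate.ctrl (Rgate ((j : ℕ) - (i : ℕ) + 1)) j i))
    ++ (((List.finRange n).filter fun (i : Fin n) => decide ((i : ℕ) < (i.rev : ℕ))).map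
          fun (i : Fin n) => Gate.swp i i.rev)

/-- A state is rank-1 (a product state) if it is an outer product of `n` vectors in ℂ². -/
def IsRankOne {n : ℕ} (ψ : QState n) : Prop :=
  ∃ a : Fin n → Fin 2 → ℂ, ∀ f, ψ f = ∏ i, a i (f i)

/-! ### Auxiliary definitions and lemmas -/

/-- Basis vector of ℂ². -/
def eVec (x : Fin 2) : Fin 2 → ℂ := fun k => if k = x then 1 else 0

/-- Product state built from single-qubit factors. -/
def Pstate {n : ℕ} (a : Fin n → Fin 2 → ℂ) : QState n := fun f => ∏ i, a i (f i)

lemma isRankOne_Pstate {n : ℕ} (a : Fin n → Fin 2 → ℂ) : IsRankOne (Pstate a) :=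
  ⟨a, fun _ => rfl⟩

/-- The invariant: the state is a product state and all qubits with index `≥ m`
are still in their initial basis state. -/
def InvState {n : ℕ} (b : Fin n → Fin 2) (m : ℕ) (ψ : QState n) : Prop :=
  ∃ a : Fin n → Fin 2 → ℂ, ψ = Pstate a ∧ ∀ j : Fin n, m ≤ (j : ℕ) → a j = eVec (b j)

lemma InvState.rankOne {n : ℕ} {b : Fin n → Fin 2} {m : ℕ} {ψ : QState n}
    (h : InvState b m ψ) : IsRankOne ψ := by
  obtain ⟨a, ha, -⟩ := h
  exact ha ▸ isRankOne_Pstate a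

lemma InvState.mono {n : ℕ} {b : Fin n → Fin 2} {m m' : ℕ} {ψ : QState n}
    (h : InvState b m ψ) (hm : m ≤ m') : InvState b m' ψ := by
  obtain ⟨a, ha, hb⟩ := h
  exact ⟨a, ha, fun j hj => hb j (hm.trans hj)⟩

lemma prod_update {n : ℕ} (a : Fin n → Fin 2 → ℂ) (f : Fin n → Fin 2) (q : Fin n)
    (j : Fin 2) :
    ∏ i, a i (Function.update f q j i) = a q j * ∏ i ∈ Finset.univ.erase q, a i (f i) := by
  rw [← Finset.mul_prod_erase Finset.univ (fun i => a i (Function.update f q j i))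
    (Finset.mem_univ q)]
  rw [Function.update_self]
  congr 1
  refine Finset.prod_congr rfl fun i hi => ?_
  rw [Function.update_of_ne (Finset.ne_of_mem_erase hi)]

lemma Pstate_eq_update {n : ℕ} (a : Fin n → Fin 2 → ℂ) (f : Fin n → Fin 2) (q : Fin n)
    (v : Fin 2 → ℂ) :
    Pstate (Function.update a q v) f = v (f q) * ∏ i ∈ Finset.univ.erase q, a i (f i) := by
  rw [Pstate, ← Finset.mul_prod_erase Finset.univ (fun i => Function.update a q v i (f i))
    (Finset.mem_univ q), Function.update_self]
  congr 1
  refine Finset.prod_congr rfl fun i hi => ?_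
  rw [Function.update_of_ne (Finset.ne_of_mem_erase hi)]

/-- A one-qubit gate maps a product state to a product state. -/
lemma applyGate_one {n : ℕ} (U : Matrix (Fin 2) (Fin 2) ℂ) (q : Fin n)
    (a : Fin n → Fin 2 → ℂ) :
    applyGate (Gate.one U q) (Pstate a) =
      Pstate (Function.update a q (fun k => ∑ j : Fin 2, U k j * a q j)) := by
  funext f
  show ∑ j : Fin 2, U (f q) j * Pstate a (Function.update f q j) = _
  rw [Pstate_eq_update]
  simp only [Pstate, prod_update]
  rw [Finset.sum_mul]
  refine Finset.sum_congr rfl fun j _ => by ring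

lemma fin2_eq_zero {x : Fin 2} (h : x ≠ 1) : x = 0 := by
  have := x.isLt
  omega

/-- A controlled gate whose control qubit factor is `|0⟩` acts as the identity on
a product state. -/
lemma applyGate_ctrl_zero {n : ℕ} (U : Matrix (Fin 2) (Fin 2) ℂ) (c t : Fin n)
    (a : Fin n → Fin 2 → ℂ) (hct : c ≠ t) (hc : a c = eVec 0) :
    applyGate (Gate.ctrl U c t) (Pstate a) = Pstate a := by
  funext f
  show (if f c = 1 then ∑ j : Fin 2, U (f t) j * Pstate a (Function.update f t j)
      else Pstate a f) = Pstate a f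
  by_cases h1 : f c = 1
  · simp only [h1, if_true]
    have hz : ∀ g : Fin n → Fin 2, g c = 1 → Pstate a g = 0 := by
      intro g hg
      refine Finset.prod_eq_zero (Finset.mem_univ c) ?_
      rw [hg, hc]
      simp [eVec]
    have h2 : Pstate a f = 0 := hz f h1
    rw [h2]
    refine Finset.sum_eq_zero fun j _ => ?_
    rw [hz (Function.update f t j) (by rw [Function.update_of_ne hct]; exact h1)]
    ring
  · simp [h1]

/-- A controlled gate whose control qubit factor is `|1⟩` acts as the corresponding
one-qubit gate on the target of a product state. -/
lemma applyGate_ctrl_one {n : ℕ} (U : Matrix (Fin 2) (Fin 2) ℂ) (c t : Fin n)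
    (a : Fin n → Fin 2 → ℂ) (hct : c ≠ t) (hc : a c = eVec 1) :
    applyGate (Gate.ctrl U c t) (Pstate a) =
      Pstate (Function.update a t (fun k => ∑ j : Fin 2, U k j * a t j)) := by
  funext f
  show (if f c = 1 then ∑ j : Fin 2, U (f t) j * Pstate a (Function.update f t j)
      else Pstate a f) = _
  by_cases h1 : f c = 1
  · simp only [h1, if_true]
    rw [Pstate_eq_update]
    simp only [Pstate, prod_update]
    rw [Finset.sum_mul]
    refine Finset.sum_congr rfl fun j _ => by ring
  · simp only [h1, if_false]
    have hc0 : f c = 0 := fin2_eq_zero h1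
    have hz1 : Pstate a f = 0 := by
      refine Finset.prod_eq_zero (Finset.mem_univ c) ?_
      rw [hc0, hc]; simp [eVec]
    have hz2 : Pstate (Function.update a t (fun k => ∑ j : Fin 2, U k j * a t j)) f = 0 := by
      refine Finset.prod_eq_zero (Finset.mem_univ c) ?_
      rw [Function.update_of_ne hct, hc0, hc]; simp [eVec]
    rw [hz1, hz2]

/-- A swap gate maps a product state to a product state. -/
lemma applyGate_swp {n : ℕ} (p q : Fin n) (a : Fin n → Fin 2 → ℂ) :
    applyGate (Gate.swp p q) (Pstate a) = Pstate (a ∘ Equiv.swap p q) := by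
  funext f
  show Pstate a (f ∘ Equiv.swap p q) = ∏ i, a (Equiv.swap p q i) (f i)
  rw [← Equiv.prod_comp (Equiv.swap p q) (fun i => a (Equiv.swap p q i) (f i))]
  refine Finset.prod_congr rfl fun i _ => by
    rw [Equiv.swap_apply_self]
    rfl

lemma isRankOne_applyGate_swp {n : ℕ} (p q : Fin n) {ψ : QState n}
    (h : IsRankOne ψ) : IsRankOne (applyGate (Gate.swp p q) ψ) := by
  obtain ⟨a, ha⟩ := h
  have : ψ = Pstate a := funext ha
  rw [this, applyGate_swp]
  exact isRankOne_Pstate _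

lemma applyGates_cons {n : ℕ} (g : Gate n) (gs : List (Gate n)) (ψ : QState n) :
    applyGates (g :: gs) ψ = applyGates gs (applyGate g ψ) := rfl

lemma applyGates_append {n : ℕ} (l1 l2 : List (Gate n)) (ψ : QState n) :
    applyGates (l1 ++ l2) ψ = applyGates l2 (applyGates l1 ψ) :=
  List.foldl_append

lemma applyGates_nil {n : ℕ} (ψ : QState n) : applyGates [] ψ = ψ := rfl

/-- One-qubit gate preserves the invariant, raising the threshold past the target. -/
lemma InvState.one {n : ℕ} {b : Fin n → Fin 2} {m m' : ℕ} {ψ : QState n}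
    (h : InvState b m ψ) (U : Matrix (Fin 2) (Fin 2) ℂ) (q : Fin n)
    (hm : m ≤ m') (hq : (q : ℕ) < m') :
    InvState b m' (applyGate (Gate.one U q) ψ) := by
  obtain ⟨a, ha, hb⟩ := h
  subst ha
  rw [applyGate_one]
  refine ⟨_, rfl, fun j hj => ?_⟩
  rw [Function.update_of_ne (fun hjq => by subst hjq; omega)]
  exact hb j (hm.trans hj)

/-- Controlled gate with control above the threshold and target below it
preserves the invariant. -/
lemma InvState.ctrl {n : ℕ} {b : Fin n → Fin 2} {m : ℕ} {ψ : QState n}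
    (h : InvState b m ψ) (U : Matrix (Fin 2) (Fin 2) ℂ) (c t : Fin n)
    (hc : m ≤ (c : ℕ)) (ht : (t : ℕ) < m) :
    InvState b m (applyGate (Gate.ctrl U c t) ψ) := by
  obtain ⟨a, ha, hb⟩ := h
  subst ha
  have hct : c ≠ t := fun hect => by rw [hect] at hc; omega
  have hac : a c = eVec (b c) := hb c hc
  rcases (by omega : ((b c : ℕ) = 0) ∨ ((b c : ℕ) = 1)).imp
      (fun h0 => (Fin.ext h0 : b c = 0)) (fun h1 => (Fin.ext h1 : b c = 1)) with h0 | h1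
  · rw [applyGate_ctrl_zero U c t a hct (h0 ▸ hac)]
    exact ⟨a, rfl, hb⟩
  · rw [applyGate_ctrl_one U c t a hct (h1 ▸ hac)]
    refine ⟨_, rfl, fun j hj => ?_⟩
    rw [Function.update_of_ne (fun hjt => by subst hjt; omega)]
    exact hb j hj

/-- A list of controlled gates, all with control above the threshold and target
below it, preserves the invariant. -/
lemma InvState.ctrls {n : ℕ} {b : Fin n → Fin 2} {m : ℕ} :
    ∀ (gs : List (Gate n)) {ψ : QState n},
      (∀ g ∈ gs, ∃ (U : Matrix (Fin 2) (Fin 2) ℂ) (c t : Fin n), g = Gate.ctrl U c t ∧ m ≤ (c : ℕ) ∧ (t : ℕ) < m) →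
      InvState b m ψ → InvState b m (applyGates gs ψ)
  | [], _, _, h => h
  | g :: gs, ψ, hgs, h => by
    obtain ⟨U, c, t, rfl, hc, ht⟩ := hgs g (List.mem_cons_self)
    rw [applyGates_cons]
    exact InvState.ctrls gs (fun g' hg' => hgs g' (List.mem_cons_of_mem _ hg'))
      (h.ctrl U c t hc ht)

/-- The `i`-th block of the QFT circuit. -/
noncomputable def qftBlock {n : ℕ} (i : Fin n) : List (Gate n) :=
  Gate.one Hgate i ::
    (((List.finRange n).filter fun (j : Fin n) => decide ((i : ℕ) < (j : ℕ))).map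
      fun (j : Fin n) => Gate.ctrl (Rgate ((j : ℕ) - (i : ℕ) + 1)) j i)

lemma mem_qftBlock_tail {n : ℕ} (i : Fin n) (g : Gate n)
    (hg : g ∈ ((List.finRange n).filter fun (j : Fin n) => decide ((i : ℕ) < (j : ℕ))).map
      fun (j : Fin n) => Gate.ctrl (Rgate ((j : ℕ) - (i : ℕ) + 1)) j i) :
    ∃ (U : Matrix (Fin 2) (Fin 2) ℂ) (c t : Fin n), g = Gate.ctrl U c t ∧ (i : ℕ) + 1 ≤ (c : ℕ) ∧ (t : ℕ) < (i : ℕ) + 1 := by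
  obtain ⟨j, hj, rfl⟩ := List.mem_map.1 hg
  have hij : (i : ℕ) < (j : ℕ) := by
    have := (List.mem_filter.1 hj).2
    exact of_decide_eq_true this
  exact ⟨_, j, i, rfl, hij, by omega⟩

/-- A full QFT block advances the invariant threshold. -/
lemma InvState.block {n : ℕ} {b : Fin n → Fin 2} {m : ℕ} {ψ : QState n}
    (h : InvState b m ψ) (i : Fin n) (hm : m ≤ (i : ℕ)) :
    InvState b ((i : ℕ) + 1) (applyGates (qftBlock i) ψ) := by
  rw [qftBlock, applyGates_cons]
  refine InvState.ctrls _ (fun g hg => ?_) (h.one Hgate i (by omega) (by omega))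
  obtain ⟨U, c, t, rfl, hc, ht⟩ := mem_qftBlock_tail i g hg
  exact ⟨U, c, t, rfl, hc, ht⟩

/-- Any prefix of a QFT block applied to an invariant state yields a rank-one state. -/
lemma rankOne_block_prefix {n : ℕ} {b : Fin n → Fin 2} {m : ℕ} {ψ : QState n}
    (h : InvState b m ψ) (i : Fin n) (hm : m ≤ (i : ℕ))
    (pre rest : List (Gate n)) (hpre : qftBlock i = pre ++ rest) :
    IsRankOne (applyGates pre ψ) := by
  rcases pre with - | ⟨g, pre'⟩
  · exact h.rankOne
  · rw [qftBlock] at hpre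
    obtain ⟨hg, htail⟩ := List.cons_eq_cons.1 hpre.symm
    subst hg
    rw [applyGates_cons]
    have hψ' : InvState b ((i : ℕ) + 1) (applyGate (Gate.one Hgate i) ψ) :=
      h.one Hgate i (by omega) (by omega)
    refine (InvState.ctrls pre' (fun g' hg' => ?_) hψ').rankOne
    have : g' ∈ ((List.finRange n).filter fun (j : Fin n) => decide ((i : ℕ) < (j : ℕ))).map
        fun (j : Fin n) => Gate.ctrl (Rgate ((j : ℕ) - (i : ℕ) + 1)) j i := by
      rw [← htail]
      exact List.mem_append_left _ hg'
    exact mem_qftBlock_tail i g' this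

/-- Main induction over the list of blocks. -/
lemma rankOne_blocks {n : ℕ} {b : Fin n → Fin 2} :
    ∀ (l : List (Fin n)) (m : ℕ) (ψ : QState n),
      (∀ i ∈ l, m ≤ (i : ℕ)) → l.Pairwise (· < ·) → InvState b m ψ →
      ∀ pre suf, l.flatMap qftBlock = pre ++ suf → IsRankOne (applyGates pre ψ)
  | [], m, ψ, _, _, h, pre, suf, hps => by
    have : pre = [] := by
      have := (List.append_eq_nil_iff).1 hps.symm
      exact this.1
    subst this
    exact h.rankOne
  | i :: l, m, ψ, hml, hpw, h, pre, suf, hps => by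
    rw [List.flatMap_cons] at hps
    rcases List.append_eq_append_iff.1 hps with ⟨a', ha1, ha2⟩ | ⟨c', hc1, hc2⟩
    · -- pre = qftBlock i ++ a',  l.flatMap qftBlock = a' ++ suf
      subst ha1
      rw [applyGates_append]
      have hInv : InvState b ((i : ℕ) + 1) (applyGates (qftBlock i) ψ) :=
        h.block i (hml i (List.mem_cons_self))
      refine rankOne_blocks l ((i : ℕ) + 1) _ (fun j hj => ?_) hpw.of_cons hInv a' suf ha2
      have : i < j := (List.pairwise_cons.1 hpw).1 j hj
      omega
    · -- qftBlock i = pre ++ c'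
      exact rankOne_block_prefix h i (hml i (List.mem_cons_self)) pre c' hc1

/-- Swap gates preserve rank-one states. -/
lemma rankOne_swaps {n : ℕ} :
    ∀ (gs : List (Gate n)) {ψ : QState n},
      (∀ g ∈ gs, ∃ p q : Fin n, g = Gate.swp p q) → IsRankOne ψ →
      IsRankOne (applyGates gs ψ)
  | [], _, _, h => h
  | g :: gs, ψ, hgs, h => by
    obtain ⟨p, q, rfl⟩ := hgs g (List.mem_cons_self)
    rw [applyGates_cons]
    exact rankOne_swaps gs (fun g' hg' => hgs g' (List.mem_cons_of_mem _ hg'))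
      (isRankOne_applyGate_swp p q h)

/-- The initial basis state is a product state with all qubits in their basis states. -/
lemma invState_init {n : ℕ} (b : Fin n → Fin 2) :
    InvState b 0 (fun f => if f = b then 1 else 0 : QState n) := by
  refine ⟨fun i => eVec (b i), funext fun f => ?_, fun j _ => rfl⟩
  show (if f = b then (1 : ℂ) else 0) = ∏ i, eVec (b i) (f i)
  by_cases hf : f = b
  · subst hf
    simp [eVec]
  · rw [if_neg hf]
    obtain ⟨i, hi⟩ := Function.ne_iff.1 hf
    refine (Finset.prod_eq_zero (Finset.mem_univ i) ?_).symm
    simp [eVec, hi]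

/-- All the intermediate states in a QFT circuit are rank 1 if the input to the
circuit is a standard basis state. -/
theorem qft_intermediate_states_rank_one (n : ℕ) (b : Fin n → Fin 2)
    (pre suf : List (Gate n)) (h : qftGates n = pre ++ suf) :
    IsRankOne (applyGates pre (fun f => if f = b then 1 else 0)) := by
  have hq : qftGates n = (List.finRange n).flatMap qftBlock
      ++ (((List.finRange n).filter fun (i : Fin n) => decide ((i : ℕ) < (i.rev : ℕ))).map
          fun (i : Fin n) => Gate.swp i i.rev) := rfl
  rw [hq] at h
  rcases List.append_eq_append_iff.1 h with ⟨a', ha1, ha2⟩ | ⟨c', hc1, hc2⟩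
  · -- pre = blocks ++ a', a' a prefix of the swaps
    subst ha1
    rw [applyGates_append]
    have hblocks : IsRankOne (applyGates ((List.finRange n).flatMap qftBlock)
        (fun f => if f = b then 1 else 0 : QState n)) := by
      refine rankOne_blocks (List.finRange n) 0 _ (fun i _ => Nat.zero_le _)
        (List.pairwise_lt_finRange n) (invState_init b) _ [] ?_
      rw [List.append_nil]
    refine rankOne_swaps a' (fun g hg => ?_) hblocks
    have : g ∈ ((List.finRange n).filter fun (i : Fin n) => decide ((i : ℕ) < (i.rev : ℕ))).map
        fun (i : Fin n) => Gate.swp i i.rev := by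
      rw [ha2]
      exact List.mem_append_left _ hg
    obtain ⟨i, -, rfl⟩ := List.mem_map.1 this
    exact ⟨i, i.rev, rfl⟩
  · -- pre is a prefix of the blocks part
    exact rankOne_blocks (List.finRange n) 0 _ (fun i _ => Nat.zero_le _)
      (List.pairwise_lt_finRange n) (invState_init b) pre c' hc1

end QFTRankOne
end

section
/- The Grover search operator with oracle of a marked items maps states of CP rank R to states of CP rank at most 2(a+1)R: applying U_o = I - 2Σ_{i=1}^a |y^(i)⟩⟨y^(i)| (with y^(i) standard basis states) multiplies CP rank by at most a+1, and subsequently applying U_d = 2|h⟩⟨h| - I multiplies CP rank by at most 2. -/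
open scoped BigOperators

lemma sum_kron_mulVec (n m S : ℕ) (hn : 0 < n)
    (kron : (Fin n → Matrix (Fin 2) (Fin 2) ℂ) →
      Matrix (Fin n → Fin 2) (Fin n → Fin 2) ℂ)
    (hkron : ∀ M, kron M = Matrix.of fun f g => ∏ i, M i (f i) (g i))
    (A : Fin m → Fin n → Matrix (Fin 2) (Fin 2) ℂ) (c : Fin m → ℂ)
    (v : Fin S → Fin n → Fin 2 → ℂ) (φ : (Fin n → Fin 2) → ℂ)
    (hφ : ∀ f, φ f = ∑ k, ∏ i, v k i (f i)) :
    ∃ w : Fin (m * S) → Fin n → Fin 2 → ℂ,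
      ∀ f, (∑ i, c i • kron (A i)).mulVec φ f = ∑ k, ∏ i, w k i (f i) := by
  classical
  set j0 : Fin n := ⟨0, hn⟩
  refine ⟨fun k => fun j x =>
    (if j = j0 then c (finProdFinEquiv.symm k).1 else 1) *
      ((A (finProdFinEquiv.symm k).1 j).mulVec (v (finProdFinEquiv.symm k).2 j)) x,
    fun f => ?_⟩
  have key : ∀ (i : Fin m) (s : Fin S),
      (∑ g : Fin n → Fin 2, (∏ j, A i j (f j) (g j)) * ∏ j, v s j (g j))
        = ∏ j, ((A i j).mulVec (v s j)) (f j) := by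
    intro i s
    have h1 : ∀ j, ((A i j).mulVec (v s j)) (f j) = ∑ x : Fin 2, A i j (f j) x * v s j x :=
      fun j => rfl
    simp_rw [h1]
    rw [Fintype.prod_sum (fun j x => A i j (f j) x * v s j x)]
    exact Finset.sum_congr rfl fun g _ => (Finset.prod_mul_distrib).symm
  have lhs : (∑ i, c i • kron (A i)).mulVec φ f
      = ∑ i : Fin m, c i * ∑ s : Fin S, ∏ j, ((A i j).mulVec (v s j)) (f j) := by
    have e1 : (∑ i, c i • kron (A i)).mulVec φ f
        = ∑ g : Fin n → Fin 2, ∑ i : Fin m, c i * (kron (A i) f g * φ g) := by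
      simp [Matrix.mulVec, dotProduct, Matrix.sum_apply, Finset.sum_mul, mul_assoc]
    rw [e1, Finset.sum_comm]
    refine Finset.sum_congr rfl fun i _ => ?_
    rw [← Finset.mul_sum]
    congr 1
    have e2 : ∀ g : Fin n → Fin 2, kron (A i) f g * φ g
        = ∑ s : Fin S, (∏ j, A i j (f j) (g j)) * ∏ j, v s j (g j) := by
      intro g
      rw [hkron, hφ, Finset.mul_sum]
      rfl
    simp_rw [e2]
    rw [Finset.sum_comm]
    exact Finset.sum_congr rfl fun s _ => key i s
  rw [lhs]
  rw [show (∑ k : Fin (m * S), ∏ i : Fin n,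
      (if i = j0 then c (finProdFinEquiv.symm k).1 else 1) *
        ((A (finProdFinEquiv.symm k).1 i).mulVec (v (finProdFinEquiv.symm k).2 i)) (f i))
      = ∑ p : Fin m × Fin S, ∏ i : Fin n,
      (if i = j0 then c p.1 else 1) * ((A p.1 i).mulVec (v p.2 i)) (f i) from
    by rw [← Equiv.sum_comp finProdFinEquiv]; simp]
  rw [Fintype.sum_prod_type]
  refine Finset.sum_congr rfl fun i _ => ?_
  rw [Finset.mul_sum]
  refine Finset.sum_congr rfl fun s _ => ?_
  rw [Finset.prod_mul_distrib, Finset.prod_ite_eq' Finset.univ j0 (fun _ => c i)]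
  simp

/-- Grover's operator with `a` marked items maps CP rank `R` states to states of CP
rank at most `2(a+1)R`: the oracle `U_o = I - 2∑ᵢ|y⁽ⁱ⁾⟩⟨y⁽ⁱ⁾|` multiplies the CP rank
by at most `a + 1`, and the diffusion `U_d = 2|h⟩⟨h| - I` by at most `2`. -/
theorem grover_cp_rank_growth (n a R : ℕ) (hn : 0 < n)
    (y : Fin a → Fin n → Fin 2) (hy : Function.Injective y)
    (E : Fin 2 → Matrix (Fin 2) (Fin 2) ℂ)
    (hE : ∀ j, E j = Matrix.single j j 1)
    (kron : (Fin n → Matrix (Fin 2) (Fin 2) ℂ) →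
      Matrix (Fin n → Fin 2) (Fin n → Fin 2) ℂ)
    (hkron : ∀ M, kron M = Matrix.of fun f g => ∏ i, M i (f i) (g i))
    (h1 : Fin 2 → ℂ) (hh1 : h1 = fun _ => ((1 / Real.sqrt 2 : ℝ) : ℂ))
    (Uo Ud : Matrix (Fin n → Fin 2) (Fin n → Fin 2) ℂ)
    (hUo : Uo = 1 - 2 • ∑ i : Fin a, kron fun j => E (y i j))
    (hUd : Ud = 2 • kron (fun _ => Matrix.vecMulVec h1 (star h1)) - 1)
    (ψ : (Fin n → Fin 2) → ℂ)
    (hψ : ∃ v : Fin R → Fin n → Fin 2 → ℂ, ∀ f, ψ f = ∑ k, ∏ i, v k i (f i)) :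
    (∃ w : Fin ((a + 1) * R) → Fin n → Fin 2 → ℂ,
      ∀ f, Uo.mulVec ψ f = ∑ k, ∏ i, w k i (f i)) ∧
    (∃ w : Fin (2 * ((a + 1) * R)) → Fin n → Fin 2 → ℂ,
      ∀ f, Ud.mulVec (Uo.mulVec ψ) f = ∑ k, ∏ i, w k i (f i)) := by
  classical
  obtain ⟨v, hv⟩ := hψ
  have kron_one : kron (fun _ => (1 : Matrix (Fin 2) (Fin 2) ℂ)) = 1 := by
    rw [hkron]
    ext f g
    simp only [Matrix.of_apply, Matrix.one_apply]
    by_cases h : f = g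
    · subst h; simp
    · rw [if_neg h]
      obtain ⟨i, hi⟩ := Function.ne_iff.mp h
      exact Finset.prod_eq_zero (Finset.mem_univ i) (by simp [Matrix.one_apply, hi])
  -- oracle as a sum of a+1 Kronecker products
  set cO : Fin (a + 1) → ℂ := Fin.cons 1 fun _ => -2 with hcO
  set AO : Fin (a + 1) → Fin n → Matrix (Fin 2) (Fin 2) ℂ :=
    Fin.cons (fun _ => 1) (fun i j => E (y i j)) with hAO
  have hUo' : Uo = ∑ i : Fin (a + 1), cO i • kron (AO i) := by
    rw [hUo, Fin.sum_univ_succ]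
    simp only [hcO, hAO, Fin.cons_zero, Fin.cons_succ, one_smul, kron_one, neg_smul,
      Finset.sum_neg_distrib, ← Finset.smul_sum, sub_eq_add_neg]
    congr 1
    rw [show ((2:ℂ) • ∑ i : Fin a, kron fun j => E (y i j))
        = (2:ℕ) • ∑ i : Fin a, kron fun j => E (y i j) from by
      simp [two_smul, two_nsmul]]
  have part1 : ∃ w : Fin ((a + 1) * R) → Fin n → Fin 2 → ℂ,
      ∀ f, Uo.mulVec ψ f = ∑ k, ∏ i, w k i (f i) := by
    rw [hUo']
    exact sum_kron_mulVec n (a + 1) R hn kron hkron AO cO v ψ hv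
  obtain ⟨w, hw⟩ := part1
  refine ⟨⟨w, hw⟩, ?_⟩
  -- diffusion as a sum of 2 Kronecker products
  set cD : Fin 2 → ℂ := ![2, -1] with hcD
  set AD : Fin 2 → Fin n → Matrix (Fin 2) (Fin 2) ℂ :=
    ![fun _ => Matrix.vecMulVec h1 (star h1), fun _ => 1] with hAD
  have hUd' : Ud = ∑ i : Fin 2, cD i • kron (AD i) := by
    rw [hUd, Fin.sum_univ_two]
    simp only [hcD, hAD, Matrix.cons_val_zero, Matrix.cons_val_one, Matrix.head_cons,
      neg_smul, one_smul, kron_one, sub_eq_add_neg]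
    congr 1
    rw [show ((2:ℂ) • kron fun _ => Matrix.vecMulVec h1 (star h1))
        = (2:ℕ) • kron fun _ => Matrix.vecMulVec h1 (star h1) from by
      simp [two_smul, two_nsmul]]
  rw [hUd']
  exact sum_kron_mulVec n 2 ((a + 1) * R) hn kron hkron AD cD w (Uo.mulVec ψ) hw
end
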